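/- Let S be a Boolean inverse monoid and φ ∈ S. If W is an open subset of 𝒢(S) with W ⊆ U_φ, then there exists an open subset W̃ ⊆ Ê(S)_{φ⁻¹φ} of Ê(S) such that W = {[φ,x] ∈ 𝒢(S) : x ∈ W̃}. -/

import Mathlib

universe u

namespace BIM

class InverseSemigroup (S : Type u) extends Semigroup S, Inv S where
  mul_inv_mul : ∀ φ : S, φ * φ⁻¹ * φ = φ
  inv_mul_inv : ∀ φ : S, φ⁻¹ * φ * φ⁻¹ = φ⁻¹
  inv_unique : ∀ φ ψ : S, φ * ψ * φ = φ → ψ * φ * ψ = ψ → ψ = φ⁻¹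

variable {S : Type u}

section InvSg
variable [InverseSemigroup S]

def cle (φ ψ : S) : Prop := φ = ψ * φ⁻¹ * φ

lemma mim (φ : S) : φ * φ⁻¹ * φ = φ := InverseSemigroup.mul_inv_mul φ
lemma imi (φ : S) : φ⁻¹ * φ * φ⁻¹ = φ⁻¹ := InverseSemigroup.inv_mul_inv φ

lemma inv_inv' (φ : S) : φ⁻¹⁻¹ = φ :=
  (InverseSemigroup.inv_unique φ⁻¹ φ (imi φ) (mim φ)).symm

lemma idem_inv {p : S} (hp : p * p = p) : p⁻¹ = p :=
  (InverseSemigroup.inv_unique p p (by rw [hp, hp]) (by rw [hp, hp])).symm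

lemma inv_mul_idem (φ : S) : (φ⁻¹ * φ) * (φ⁻¹ * φ) = φ⁻¹ * φ := by
  rw [mul_assoc φ⁻¹ φ (φ⁻¹ * φ), ← mul_assoc φ φ⁻¹ φ, mim]

lemma mul_inv_idem (φ : S) : (φ * φ⁻¹) * (φ * φ⁻¹) = φ * φ⁻¹ := by
  rw [mul_assoc φ φ⁻¹ (φ * φ⁻¹), ← mul_assoc φ⁻¹ φ φ⁻¹, imi]

lemma idem_absorb {e : S} (he : e * e = e) (x : S) : e * (e * x) = e * x := by
  rw [← mul_assoc, he]

lemma mul_idem {e f : S} (he : e * e = e) (hf : f * f = f) :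
    (e * f) * (e * f) = e * f := by
  set a := (e * f)⁻¹ with ha
  have k1 : (e * f) * a * (e * f) = e * f := mim (e * f)
  have k2 : a * (e * f) * a = a := imi (e * f)
  have k2x : ∀ x : S, a * (e * (f * (a * x))) = a * x := by
    intro x
    have := congrArg (· * x) k2
    simp only [mul_assoc] at this
    simpa [mul_assoc] using this
  have hme : (e * f) * (f * (a * e)) * (e * f) = e * f := by
    have k1' : e * (f * (a * (e * f))) = e * f := by
      simpa [mul_assoc] using k1
    calc (e * f) * (f * (a * e)) * (e * f)
        = e * (f * (f * (a * (e * (e * f))))) := by simp only [mul_assoc]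
      _ = e * (f * (a * (e * (e * f)))) := by rw [idem_absorb hf]
      _ = e * (f * (a * (e * f))) := by rw [idem_absorb he]
      _ = e * f := k1'
  have hmh : (f * (a * e)) * (e * f) * (f * (a * e)) = f * (a * e) := by
    calc (f * (a * e)) * (e * f) * (f * (a * e))
        = f * (a * (e * (e * (f * (f * (a * e)))))) := by simp only [mul_assoc]
      _ = f * (a * (e * (f * (f * (a * e))))) := by rw [idem_absorb he]
      _ = f * (a * (e * (f * (a * e)))) := by rw [idem_absorb hf]
      _ = f * (a * e) := by rw [k2x]
  have hha : f * (a * e) = a := InverseSemigroup.inv_unique (e * f) (f * (a * e)) hme hmh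
  have hh : (f * (a * e)) * (f * (a * e)) = f * (a * e) := by
    calc (f * (a * e)) * (f * (a * e))
        = f * (a * (e * (f * (a * e)))) := by simp only [mul_assoc]
      _ = f * (a * e) := by rw [k2x]
  have haa : a * a = a := by rw [← hha]; exact hh
  have hefa : e * f = a := by
    rw [← idem_inv haa, ha, inv_inv']
  rw [hefa]; exact haa

lemma idem_comm {e f : S} (he : e * e = e) (hf : f * f = f) : e * f = f * e := by
  have hef : (e * f) * (e * f) = e * f := mul_idem he hf
  have hfe : (f * e) * (f * e) = f * e := mul_idem hf he
  have h1 : (e * f) * (f * e) * (e * f) = e * f := by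
    calc (e * f) * (f * e) * (e * f)
        = e * (f * (f * (e * (e * f)))) := by simp only [mul_assoc]
      _ = e * (f * (e * (e * f))) := by rw [idem_absorb hf]
      _ = e * (f * (e * f)) := by rw [idem_absorb he]
      _ = (e * f) * (e * f) := by simp only [mul_assoc]
      _ = e * f := hef
  have h2 : (f * e) * (e * f) * (f * e) = f * e := by
    calc (f * e) * (e * f) * (f * e)
        = f * (e * (e * (f * (f * e)))) := by simp only [mul_assoc]
      _ = f * (e * (f * (f * e))) := by rw [idem_absorb he]
      _ = f * (e * (f * e)) := by rw [idem_absorb hf]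
      _ = (f * e) * (f * e) := by simp only [mul_assoc]
      _ = f * e := hfe
  have : f * e = (e * f)⁻¹ := InverseSemigroup.inv_unique (e * f) (f * e) h1 h2
  rw [this, idem_inv hef]

lemma conj_idem (φ : S) {p : S} (hp : p * p = p) :
    (φ⁻¹ * p * φ) * (φ⁻¹ * p * φ) = φ⁻¹ * p * φ := by
  have hcomm : p * (φ * φ⁻¹) = (φ * φ⁻¹) * p := idem_comm hp (mul_inv_idem φ)
  calc (φ⁻¹ * p * φ) * (φ⁻¹ * p * φ)
      = φ⁻¹ * (p * (φ * φ⁻¹) * (p * φ)) := by simp only [mul_assoc]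
    _ = φ⁻¹ * ((φ * φ⁻¹) * p * (p * φ)) := by rw [hcomm]
    _ = φ⁻¹ * (φ * φ⁻¹) * (p * (p * φ)) := by simp only [mul_assoc]
    _ = φ⁻¹ * (φ * φ⁻¹) * (p * φ) := by rw [idem_absorb hp]
    _ = φ⁻¹ * (p * φ) := by rw [← mul_assoc φ⁻¹ φ φ⁻¹, imi]
    _ = φ⁻¹ * p * φ := by rw [mul_assoc]

lemma cle_idem_iff {p : S} (q : S) (hp : p * p = p) : cle p q ↔ p = q * p := by
  unfold cle
  rw [idem_inv hp, mul_assoc q p p, hp]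

end InvSg

class InverseSemigroupWithZero (S : Type u) extends InverseSemigroup S, Zero S where
  zero_mul' : ∀ φ : S, 0 * φ = 0
  mul_zero' : ∀ φ : S, φ * 0 = 0

def orth [InverseSemigroupWithZero S] (φ ψ : S) : Prop := φ * ψ⁻¹ = 0 ∧ φ⁻¹ * ψ = 0

class AdditiveInvSemigroup (S : Type u) extends InverseSemigroupWithZero S where
  vsup : S → S → S
  cle_vsup_left : ∀ φ ψ : S, orth φ ψ → cle φ (vsup φ ψ)
  cle_vsup_right : ∀ φ ψ : S, orth φ ψ → cle ψ (vsup φ ψ)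
  vsup_cle : ∀ φ ψ χ : S, orth φ ψ → cle φ χ → cle ψ χ → cle (vsup φ ψ) χ
  mul_vsup : ∀ φ ψ χ : S, orth φ ψ → χ * vsup φ ψ = vsup (χ * φ) (χ * ψ)
  vsup_mul : ∀ φ ψ χ : S, orth φ ψ → vsup φ ψ * χ = vsup (φ * χ) (ψ * χ)

abbrev E (S : Type u) [Mul S] : Type u := {p : S // p * p = p}

class BooleanInverseMonoid (S : Type u) extends AdditiveInvSemigroup S where
  vinf : S → S → S
  vinf_cle_left : ∀ φ ψ : S, cle (vinf φ ψ) φ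
  vinf_cle_right : ∀ φ ψ : S, cle (vinf φ ψ) ψ
  cle_vinf : ∀ φ ψ χ : S, cle χ φ → cle χ ψ → cle χ (vinf φ ψ)
  ba : BooleanAlgebra (E S)
  ba_le_iff : ∀ p q : E S, (letI := ba; p ≤ q) ↔ cle p.1 q.1

instance (priority := 100) instBAE [BooleanInverseMonoid S] : BooleanAlgebra (E S) :=
  BooleanInverseMonoid.ba

lemma ba_le [BooleanInverseMonoid S] (p q : E S) : p ≤ q ↔ cle p.1 q.1 :=
  BooleanInverseMonoid.ba_le_iff p q

section BIMsec
variable [BooleanInverseMonoid S]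

lemma E_le_iff (p q : E S) : p ≤ q ↔ p.1 = q.1 * p.1 := by
  rw [ba_le]; exact cle_idem_iff q.1 p.2

/-- In `E S`, the Boolean-algebra meet is given by the semigroup product. -/
lemma inf_coe (p q : E S) : ((p ⊓ q : E S) : S) = p.1 * q.1 := by
  have hm : (p.1 * q.1) * (p.1 * q.1) = p.1 * q.1 := mul_idem p.2 q.2
  have h1 : (⟨p.1 * q.1, hm⟩ : E S) ≤ p := by
    rw [E_le_iff]
    show p.1 * q.1 = p.1 * (p.1 * q.1)
    rw [← mul_assoc, p.2]
  have h2 : (⟨p.1 * q.1, hm⟩ : E S) ≤ q := by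
    rw [E_le_iff]
    show p.1 * q.1 = q.1 * (p.1 * q.1)
    rw [← mul_assoc, idem_comm q.2 p.2, mul_assoc, q.2]
  have h3 : p ⊓ q ≤ (⟨p.1 * q.1, hm⟩ : E S) := by
    have hp' : (p ⊓ q : E S).1 = p.1 * (p ⊓ q).1 := (E_le_iff _ _).1 inf_le_left
    have hq' : (p ⊓ q : E S).1 = q.1 * (p ⊓ q).1 := (E_le_iff _ _).1 inf_le_right
    rw [E_le_iff]
    show (p ⊓ q : E S).1 = p.1 * q.1 * (p ⊓ q).1
    rw [mul_assoc, ← hq', ← hp']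
  have : p ⊓ q = (⟨p.1 * q.1, hm⟩ : E S) := le_antisymm h3 (le_inf h1 h2)
  exact congrArg Subtype.val this

/-- A character on `E S`: a Boolean algebra homomorphism into the two-element
Boolean algebra. -/
structure Character (S : Type u) [BooleanInverseMonoid S] where
  toFun : E S → Bool
  map_inf' : ∀ p q : E S, toFun (p ⊓ q) = (toFun p && toFun q)
  map_sup' : ∀ p q : E S, toFun (p ⊔ q) = (toFun p || toFun q)
  map_top' : toFun ⊤ = true
  map_bot' : toFun ⊥ = false

lemma Character.ext {x y : Character S} (h : ∀ p, x.toFun p = y.toFun p) : x = y := by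
  cases x; cases y
  congr 1
  funext p
  exact h p

instance : TopologicalSpace (Character S) :=
  TopologicalSpace.induced (fun x : Character S => x.toFun) inferInstance

/-- `Ê(S)_φ`, the set of characters `x` with `x(φ⁻¹φ) = 1`. -/
def EhatAt (φ : S) : Set (Character S) :=
  {x | x.toFun ⟨φ⁻¹ * φ, inv_mul_idem φ⟩ = true}

/-- `α_φ(x)` as a raw function on idempotents: `p ↦ x(φ⁻¹ p φ)`. -/
def alphaFun (φ : S) (x : Character S) : E S → Bool :=
  fun p => x.toFun ⟨φ⁻¹ * p.1 * φ, conj_idem φ p.2⟩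

/-- The underlying set `S ∗ Ê(S)` of pairs `(φ, x)` with `x ∈ Ê(S)_φ`. -/
abbrev SStar (S : Type u) [BooleanInverseMonoid S] : Type u :=
  {z : S × Character S // z.2 ∈ EhatAt z.1}

/-- The equivalence relation defining `𝒢(S)`. -/
def rel (a b : SStar S) : Prop :=
  a.1.2 = b.1.2 ∧ ∃ p : E S, a.1.2.toFun p = true ∧ a.1.1 * p.1 = b.1.1 * p.1

lemma rel_equivalence : Equivalence (rel (S := S)) := by
  constructor
  · intro a
    exact ⟨rfl, ⟨⊤, a.1.2.map_top', rfl⟩⟩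
  · rintro a b ⟨hxy, p, hp1, hp2⟩
    exact ⟨hxy.symm, p, by rw [← hxy]; exact hp1, hp2.symm⟩
  · rintro a b c ⟨hxy, p, hp1, hp2⟩ ⟨hyz, q, hq1, hq2⟩
    refine ⟨hxy.trans hyz, ⟨⟨p.1 * q.1, mul_idem p.2 q.2⟩, ?_, ?_⟩⟩
    · have : (⟨p.1 * q.1, mul_idem p.2 q.2⟩ : E S) = p ⊓ q :=
        Subtype.ext (inf_coe p q).symm
      rw [this, a.1.2.map_inf', hp1]
      rw [hxy]
      rw [hq1]
      rfl
    · show a.1.1 * (p.1 * q.1) = c.1.1 * (p.1 * q.1)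
      have h1 : a.1.1 * (p.1 * q.1) = b.1.1 * (p.1 * q.1) := by
        rw [← mul_assoc, hp2, mul_assoc]
      have h2 : b.1.1 * (p.1 * q.1) = c.1.1 * (p.1 * q.1) := by
        rw [idem_comm p.2 q.2, ← mul_assoc, hq2, mul_assoc]
      rw [h1, h2]

instance gpdSetoid (S : Type u) [BooleanInverseMonoid S] : Setoid (SStar S) :=
  ⟨rel, rel_equivalence⟩

/-- The groupoid `𝒢(S)` as a set: the quotient of `S ∗ Ê(S)` by `∼`. -/
def Gpd (S : Type u) [BooleanInverseMonoid S] : Type u := Quotient (gpdSetoid S)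

/-- The class `[φ, x]` in `𝒢(S)`. -/
def mk (φ : S) (x : Character S) (hx : x ∈ EhatAt φ) : Gpd S :=
  Quotient.mk (gpdSetoid S) ⟨(φ, x), hx⟩

/-- The basic set `U_φ = {[φ, x] : x ∈ Ê(S)_φ}`. -/
def U (φ : S) : Set (Gpd S) := {g | ∃ (x : Character S) (hx : x ∈ EhatAt φ), g = mk φ x hx}

/-- The topology on `𝒢(S)` generated by the sets `U_φ`. -/
instance : TopologicalSpace (Gpd S) :=
  TopologicalSpace.generateFrom {V : Set (Gpd S) | ∃ φ : S, V = U φ}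

end BIMsec

end BIM


open BIM

namespace BIM
section Aux
variable {S : Type u} [BooleanInverseMonoid S]

lemma evalOpen (e : E S) : IsOpen {x : Character S | x.toFun e = true} := by
  have hc : Continuous (fun x : Character S => x.toFun) := continuous_induced_dom
  have h1 : IsOpen ((fun f : E S → Bool => f e) ⁻¹' ({true} : Set Bool)) :=
    (continuous_apply (A := fun _ : E S => Bool) e).isOpen_preimage ({true} : Set Bool) (isOpen_discrete _)
  have h3 : {x : Character S | x.toFun e = true}
      = (fun x : Character S => x.toFun) ⁻¹' ((fun f : E S → Bool => f e) ⁻¹' ({true} : Set Bool)) := by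
    ext x; simp
  rw [h3]
  exact hc.isOpen_preimage _ h1

lemma EhatAt_open (ψ : S) : IsOpen (EhatAt (S := S) ψ) := evalOpen _

lemma mk_mem_U_iff {ψ φ : S} (x : Character S) (hx : x ∈ EhatAt φ) :
    mk φ x hx ∈ U ψ ↔ x ∈ EhatAt ψ ∧ ∃ p : E S, x.toFun p = true ∧ φ * p.1 = ψ * p.1 := by
  constructor
  · rintro ⟨y, hy, hxy⟩
    have h := Quotient.exact hxy
    obtain ⟨hx2, p, hp1, hp2⟩ := h
    cases hx2
    exact ⟨hy, p, hp1, hp2⟩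
  · rintro ⟨hy, p, hp1, hp2⟩
    refine ⟨x, hy, Quotient.sound ?_⟩
    exact ⟨rfl, p, hp1, hp2⟩

lemma beta_cont (φ : S) :
    Continuous (fun x : {x : Character S // x ∈ EhatAt φ} => mk φ x.1 x.2) := by
  rw [continuous_generateFrom_iff]
  rintro V ⟨ψ, rfl⟩
  have heq : (fun x : {x : Character S // x ∈ EhatAt φ} => mk φ x.1 x.2) ⁻¹' U ψ
      = Subtype.val ⁻¹' (EhatAt ψ ∩ ⋃ p ∈ {p : E S | φ * p.1 = ψ * p.1},
          {x : Character S | x.toFun p = true}) := by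
    ext x
    simp only [Set.mem_preimage, mk_mem_U_iff, Set.mem_inter_iff, Set.mem_iUnion,
      Set.mem_setOf_eq, exists_prop]
    constructor
    · rintro ⟨h1, p, h2, h3⟩; exact ⟨h1, p, h3, h2⟩
    · rintro ⟨h1, p, h3, h2⟩; exact ⟨h1, p, h2, h3⟩
  rw [heq]
  exact (continuous_subtype_val).isOpen_preimage _
    ((EhatAt_open ψ).inter (isOpen_biUnion fun p _ => evalOpen p))

end Aux
end BIM


/-- If W ⊆ U_φ is open in 𝒢(S), then W = {[φ,x] : x ∈ W̃} for some
open subset W̃ ⊆ Ê(S)_{φ⁻¹φ} of Ê(S). -/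
theorem stmt13 {S : Type u} [BooleanInverseMonoid S] (φ : S) (W : Set (Gpd S))
    (hWopen : IsOpen W) (hWsub : W ⊆ U φ) :
    ∃ Wt : Set (Character S), IsOpen Wt ∧ Wt ⊆ EhatAt (φ⁻¹ * φ) ∧
      W = {g : Gpd S | ∃ (x : Character S) (hx : x ∈ EhatAt φ), x ∈ Wt ∧ g = mk φ x hx} := by
  have hcont := beta_cont (S := S) φ
  have hpre : IsOpen ((fun x : {x : Character S // x ∈ EhatAt φ} => mk φ x.1 x.2) ⁻¹' W) :=
    hcont.isOpen_preimage _ hWopen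
  refine ⟨Subtype.val '' ((fun x : {x : Character S // x ∈ EhatAt φ} => mk φ x.1 x.2) ⁻¹' W),
    ?_, ?_, ?_⟩
  · exact (EhatAt_open φ).isOpenMap_subtype_val _ hpre
  · rintro x ⟨x', hx', rfl⟩
    have hE : ((φ⁻¹ * φ)⁻¹ * (φ⁻¹ * φ) : S) = φ⁻¹ * φ := by
      rw [idem_inv (inv_mul_idem φ), inv_mul_idem φ]
    show x'.1.toFun ⟨(φ⁻¹ * φ)⁻¹ * (φ⁻¹ * φ), inv_mul_idem _⟩ = true
    have h2 : (⟨(φ⁻¹ * φ)⁻¹ * (φ⁻¹ * φ), inv_mul_idem _⟩ : E S)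
        = ⟨φ⁻¹ * φ, inv_mul_idem φ⟩ := Subtype.ext hE
    rw [h2]; exact x'.2
  · ext g
    constructor
    · intro hg
      obtain ⟨x, hx, rfl⟩ := hWsub hg
      exact ⟨x, hx, ⟨⟨x, hx⟩, hg, rfl⟩, rfl⟩
    · rintro ⟨x, hx, ⟨x', hx'W, hval⟩, rfl⟩
      have hx'' : x' = ⟨x, hx⟩ := Subtype.ext hval
      rw [hx''] at hx'W
      exact hx'W
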